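/- Let P = ⟨1/p : p prime⟩ be the Puiseux monoid generated by the reciprocals of the primes. Then P is atomic with A(P) = {1/p : p prime}, and ρ_k(P) = ∞ for all sufficiently large k. -/

import Mathlib

/-- A Puiseux monoid: an additive submonoid of ℚ consisting of nonnegative rationals. -/
def PM.Puiseux (P : AddSubmonoid ℚ) : Prop := ∀ x ∈ P, 0 ≤ x

/-- `a` is an atom of `P`. -/
def PM.IsAtom (P : AddSubmonoid ℚ) (a : ℚ) : Prop :=
  a ∈ P ∧ a ≠ 0 ∧ ∀ x ∈ P, ∀ y ∈ P, a = x + y → x = 0 ∨ y = 0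

/-- A factorization of `x` is a multiset of atoms of `P` summing to `x`. -/
def PM.IsFactorization (P : AddSubmonoid ℚ) (x : ℚ) (z : Multiset ℚ) : Prop :=
  (∀ a ∈ z, PM.IsAtom P a) ∧ z.sum = x

/-- The set of lengths of `x`. -/
def PM.Lengths (P : AddSubmonoid ℚ) (x : ℚ) : Set ℕ :=
  {n | ∃ z : Multiset ℚ, PM.IsFactorization P x z ∧ Multiset.card z = n}

/-- `P` is atomic: it is generated by its set of atoms. -/
def PM.Atomic (P : AddSubmonoid ℚ) : Prop :=
  AddSubmonoid.closure {a | PM.IsAtom P a} = P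

/-- The union of sets of lengths `U_k(P)`. -/
def PM.U (P : AddSubmonoid ℚ) (k : ℕ) : Set ℕ :=
  {l | ∃ x ∈ P, k ∈ PM.Lengths P x ∧ l ∈ PM.Lengths P x}


open Multiset

def PA : Set ℚ := {q | ∃ p : ℕ, p.Prime ∧ q = 1 / p}

def rcp (q : ℕ) : ℚ := 1 / q

lemma prod_mul_sum_int (t : Multiset ℕ) (ht : ∀ q ∈ t, q ≠ 0) :
    ∃ n : ℕ, (t.prod : ℚ) * (t.map rcp).sum = n := by
  induction t using Multiset.induction with
  | empty => exact ⟨0, by simp⟩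
  | cons q t ih =>
    obtain ⟨n, hn⟩ := ih (fun r hr => ht r (mem_cons_of_mem hr))
    refine ⟨t.prod + q * n, ?_⟩
    have hq : (q:ℚ) ≠ 0 := Nat.cast_ne_zero.2 (ht q (mem_cons_self q t))
    rw [Multiset.map_cons, Multiset.sum_cons, Multiset.prod_cons]
    push_cast
    rw [← hn]
    unfold rcp
    field_simp
    push_cast
    ring

lemma mem_P_iff {x : ℚ} : x ∈ AddSubmonoid.closure PA ↔
    ∃ s : Multiset ℕ, (∀ q ∈ s, q.Prime) ∧ (s.map rcp).sum = x := by
  constructor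
  · intro hx
    induction hx using AddSubmonoid.closure_induction with
    | mem y hy => obtain ⟨p, hp, rfl⟩ := hy; exact ⟨{p}, by simpa using hp, by simp [rcp]⟩
    | zero => exact ⟨0, by simp, by simp⟩
    | add a b _ _ iha ihb =>
      obtain ⟨s, hs, hsum⟩ := iha
      obtain ⟨t, ht, htsum⟩ := ihb
      refine ⟨s + t, ?_, by simp [hsum, htsum]⟩
      intro q hq
      rcases Multiset.mem_add.1 hq with h | h
      exacts [hs q h, ht q h]
  · rintro ⟨s, hs, rfl⟩
    refine AddSubmonoid.multiset_sum_mem _ _ ?_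
    intro a ha
    obtain ⟨q, hq, rfl⟩ := Multiset.mem_map.1 ha
    exact AddSubmonoid.subset_closure ⟨q, hs q hq, rfl⟩

lemma key (p : ℕ) (hp : p.Prime) (s : Multiset ℕ) (hs : ∀ q ∈ s, q.Prime)
    (hsum : (s.map rcp).sum = 1/p) : s = {p} := by
  classical
  set m := count p s with hm
  set t := s.filter (· ≠ p) with htdef
  have hsplit : s = replicate m p + t := by
    rw [htdef, hm, ← Multiset.filter_eq' s p]
    exact (Multiset.filter_add_not _ _).symm
  have hppos : (0:ℚ) < p := by exact_mod_cast hp.pos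
  have hT : (t.map rcp).sum = 1/p - m/p := by
    have h2 := hsum
    rw [hsplit] at h2
    simp [Multiset.map_replicate, Multiset.sum_replicate, nsmul_eq_mul, rcp] at h2
    unfold rcp
    field_simp at h2 ⊢
    unfold rcp at h2
    linarith [h2]
  have hTnonneg : 0 ≤ (t.map rcp).sum := by
    refine Multiset.sum_nonneg ?_
    intro a ha
    obtain ⟨q, hq, rfl⟩ := Multiset.mem_map.1 ha
    unfold rcp
    positivity
  have hm1 : m ≤ 1 := by
    by_contra h
    push_neg at h
    have h2 : (2:ℚ) ≤ m := by exact_mod_cast h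
    have h3 : (m:ℚ)/p ≤ 1/p := by linarith [hT, hTnonneg]
    rw [div_le_div_iff₀ hppos hppos] at h3
    nlinarith
  interval_cases m
  · -- m = 0 : contradiction
    exfalso
    have hps : p ∉ s := Multiset.count_eq_zero.1 hm.symm
    have htne : ∀ q ∈ s, q ≠ 0 := fun q hq => (hs q hq).ne_zero
    obtain ⟨n, hn⟩ := prod_mul_sum_int s htne
    rw [hsum] at hn
    have hprodN : s.prod = n * p := by
      have hprod : (s.prod : ℚ) = n * p := by
        field_simp at hn
        push_cast at hn ⊢
        linarith [hn]
      exact_mod_cast hprod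
    have hdvd : p ∣ s.prod := ⟨n, by rw [hprodN, Nat.mul_comm]⟩
    obtain ⟨q, hq, hpq⟩ := (Nat.Prime.prime hp).exists_mem_multiset_dvd hdvd
    have heq : p = q := (Nat.prime_dvd_prime_iff_eq hp (hs q hq)).1 hpq
    exact hps (heq ▸ hq)
  · -- m = 1
    have ht0 : t = 0 := by
      by_contra h
      obtain ⟨q, hq⟩ := Multiset.exists_mem_of_ne_zero h
      have hq' : rcp q ∈ t.map rcp := Multiset.mem_map_of_mem _ hq
      have hle : rcp q ≤ (t.map rcp).sum := by
        refine Multiset.single_le_sum ?_ _ hq'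
        intro a ha
        obtain ⟨r, hr, rfl⟩ := Multiset.mem_map.1 ha
        unfold rcp; positivity
      have hqprime : q.Prime := hs q (by rw [hsplit]; exact Multiset.mem_add.2 (Or.inr hq))
      have hqpos : (0:ℚ) < rcp q := by
        have : (0:ℚ) < q := by exact_mod_cast hqprime.pos
        unfold rcp; positivity
      rw [hT] at hle
      push_cast at hle
      nlinarith
    rw [hsplit, ht0]
    simp

lemma sum_pos_of_ne_zero {s : Multiset ℕ} (hs : ∀ q ∈ s, q.Prime) (h : s ≠ 0) :
    0 < (s.map rcp).sum := by
  obtain ⟨q, hq⟩ := Multiset.exists_mem_of_ne_zero h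
  have hq' : rcp q ∈ s.map rcp := Multiset.mem_map_of_mem _ hq
  have hle : rcp q ≤ (s.map rcp).sum := by
    refine Multiset.single_le_sum ?_ _ hq'
    intro a ha
    obtain ⟨r, hr, rfl⟩ := Multiset.mem_map.1 ha
    unfold rcp; positivity
  have hqpos : (0:ℚ) < rcp q := by
    have : (0:ℚ) < q := by exact_mod_cast (hs q hq).pos
    unfold rcp; positivity
  linarith

lemma atom_of_mem_A {a : ℚ} (ha : a ∈ PA) : PM.IsAtom (AddSubmonoid.closure PA) a := by
  obtain ⟨p, hp, rfl⟩ := ha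
  have hppos : (0:ℚ) < p := by exact_mod_cast hp.pos
  refine ⟨AddSubmonoid.subset_closure ⟨p, hp, rfl⟩, by positivity, ?_⟩
  intro x hx y hy hxy
  obtain ⟨s, hs, hsum⟩ := mem_P_iff.1 hx
  obtain ⟨t, ht, htsum⟩ := mem_P_iff.1 hy
  have hsumst : ((s + t).map rcp).sum = 1 / p := by
    rw [Multiset.map_add, Multiset.sum_add, hsum, htsum, hxy]
  have hst : s + t = {p} := by
    refine key p hp _ ?_ hsumst
    intro q hq
    rcases Multiset.mem_add.1 hq with h | h
    exacts [hs q h, ht q h]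
  have hcard : Multiset.card s + Multiset.card t = 1 := by
    have := congrArg Multiset.card hst
    simpa using this
  rcases Nat.add_eq_one_iff.1 hcard with ⟨h1, _⟩ | ⟨_, h1⟩
  · left; rw [← hsum, Multiset.card_eq_zero.1 h1]; simp
  · right; rw [← htsum, Multiset.card_eq_zero.1 h1]; simp

lemma atoms_eq : {a : ℚ | PM.IsAtom (AddSubmonoid.closure PA) a} = PA := by
  ext a
  constructor
  · rintro ⟨hmem, hne, hsplit⟩
    obtain ⟨s, hs, hsum⟩ := mem_P_iff.1 hmem
    rcases Multiset.empty_or_exists_mem s with rfl | ⟨q, hq⟩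
    · exact absurd hsum.symm (by simpa using hne)
    obtain ⟨s', rfl⟩ := Multiset.exists_cons_of_mem hq
    have hqP : rcp q ∈ AddSubmonoid.closure PA :=
      AddSubmonoid.subset_closure ⟨q, hs q (Multiset.mem_cons_self q s'), rfl⟩
    have hs'P : (s'.map rcp).sum ∈ AddSubmonoid.closure PA :=
      mem_P_iff.2 ⟨s', fun r hr => hs r (Multiset.mem_cons_of_mem hr), rfl⟩
    have hdecomp : a = rcp q + (s'.map rcp).sum := by
      rw [← hsum, Multiset.map_cons, Multiset.sum_cons]
    rcases hsplit _ hqP _ hs'P hdecomp with h | h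
    · exfalso
      have hq0 : (0:ℚ) < q := by exact_mod_cast (hs q (Multiset.mem_cons_self q s')).pos
      have : (0:ℚ) < rcp q := by unfold rcp; positivity
      linarith [h ▸ this]
    · have hs0 : s' = 0 := by
        by_contra hne'
        have := sum_pos_of_ne_zero (fun r hr => hs r (Multiset.mem_cons_of_mem hr)) hne'
        linarith [h ▸ this]
      refine ⟨q, hs q (Multiset.mem_cons_self q s'), ?_⟩
      rw [hdecomp, hs0]
      simp [rcp]
  · exact atom_of_mem_A

theorem stmt7 :
    let A : Set ℚ := {q | ∃ p : ℕ, p.Prime ∧ q = 1 / p}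
    let P := AddSubmonoid.closure A
    PM.Atomic P ∧ {a : ℚ | PM.IsAtom P a} = A ∧
      ∃ d : ℕ, ∀ k ≥ d, (PM.U P k).Infinite := by
  intro A P
  have hAPA : A = PA := rfl
  have hatoms : {a : ℚ | PM.IsAtom P a} = A := by rw [hAPA]; exact atoms_eq
  refine ⟨?_, hatoms, ?_⟩
  · unfold PM.Atomic
    rw [hatoms]
  · refine ⟨2, fun k hk => ?_⟩
    -- the element x = k/2 has factorizations of length k and k-2+p for every prime p
    have hfac : ∀ p : ℕ, p.Prime → ∀ n : ℕ,
        PM.IsFactorization P ((n:ℚ)/2 + 1)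
          (replicate n ((1:ℚ)/2) + replicate p (1/(p:ℚ))) := by
      intro p hp n
      constructor
      · intro a ha
        rcases Multiset.mem_add.1 ha with h | h
        · rw [Multiset.eq_of_mem_replicate h]
          exact atom_of_mem_A ⟨2, Nat.prime_two, rfl⟩
        · rw [Multiset.eq_of_mem_replicate h]
          exact atom_of_mem_A ⟨p, hp, rfl⟩
      · have hp0 : (p:ℚ) ≠ 0 := Nat.cast_ne_zero.2 hp.ne_zero
        rw [Multiset.sum_add]
        simp only [Multiset.sum_replicate, nsmul_eq_mul]
        field_simp
    have hxP : ((k:ℚ)/2 : ℚ) ∈ P := by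
      apply mem_P_iff.2 ⟨replicate k 2, ?_, ?_⟩
      · intro q hq; rw [Multiset.eq_of_mem_replicate hq]; exact Nat.prime_two
      · simp [rcp, Multiset.sum_replicate, nsmul_eq_mul]
        ring
    have hcast : ((k - 2 : ℕ) : ℚ) = (k:ℚ) - 2 := by
      have : (2:ℕ) ≤ k := hk
      push_cast [Nat.cast_sub this]
      ring
    have hxval : ((k - 2 : ℕ) : ℚ)/2 + 1 = (k:ℚ)/2 := by
      rw [hcast]; ring
    have hkL : k ∈ PM.Lengths P ((k:ℚ)/2) := by
      refine ⟨replicate (k-2) ((1:ℚ)/2) + replicate 2 ((1:ℚ)/2), ?_, ?_⟩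
      · have := hfac 2 Nat.prime_two (k-2)
        rw [hxval] at this
        simpa using this
      · simp; omega
    have hmem : ∀ p : ℕ, p.Prime → (k - 2 + p) ∈ PM.U P k := by
      intro p hp
      refine ⟨(k:ℚ)/2, hxP, hkL, ?_⟩
      refine ⟨replicate (k-2) ((1:ℚ)/2) + replicate p (1/(p:ℚ)), ?_, ?_⟩
      · have := hfac p hp (k-2)
        rwa [hxval] at this
      · simp
    have hsub : (fun p => k - 2 + p) '' {p : ℕ | p.Prime} ⊆ PM.U P k := by
      rintro _ ⟨p, hp, rfl⟩
      exact hmem p hp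
    refine Set.Infinite.mono hsub ?_
    exact Set.Infinite.image (Set.injOn_of_injective (add_right_injective (k-2)))
      Nat.infinite_setOf_prime
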